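/- Ron Graham's sequence g is a bijection from the positive integers onto the set of positive integers that are not prime. -/
import Mathlib


/-- `Corr n k` says there is a square-product sequence (a nonempty finite set of
positive integers whose product is a perfect square) with least term `n` and
greatest term `k`. -/
def Corr (n k : ℕ) : Prop :=
  ∃ S : Finset ℕ, (∀ a ∈ S, 0 < a) ∧ IsSquare (∏ a ∈ S, a) ∧
    n ∈ S ∧ k ∈ S ∧ ∀ a ∈ S, n ≤ a ∧ a ≤ k

/-- Ron Graham's sequence: the least `k` such that there is a square-product
sequence with least term `n` and greatest term `k`. -/
noncomputable def g (n : ℕ) : ℕ := sInf {k | Corr n k}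

lemma corr_four (n : ℕ) (hn : 0 < n) : Corr n (4 * n) := by
  have hne : n ≠ 4 * n := by omega
  refine ⟨{n, 4 * n}, ?_, ?_, ?_, ?_, ?_⟩
  · intro a ha; simp at ha; rcases ha with h | h <;> omega
  · rw [Finset.prod_pair hne]; exact ⟨2 * n, by ring⟩
  · simp
  · simp
  · intro a ha; simp at ha; rcases ha with h | h <;> omega

lemma Corr.le {n k : ℕ} (h : Corr n k) : n ≤ k := by
  obtain ⟨S, _, _, hn, hk, hb⟩ := h; exact (hb k hk).1

lemma Corr.pos {n k : ℕ} (h : Corr n k) : 0 < n := by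
  obtain ⟨S, hp, _, hn, _, _⟩ := h; exact hp n hn

lemma g_corr {n : ℕ} (hn : 0 < n) : Corr n (g n) := by
  have h : {k | Corr n k}.Nonempty := ⟨4 * n, corr_four n hn⟩
  exact Nat.sInf_mem h

lemma g_le {n k : ℕ} (h : Corr n k) : g n ≤ k := Nat.sInf_le h

lemma isSquare_of_mul_sq {x c : ℕ} (hc : c ≠ 0) (h : IsSquare (x * c ^ 2)) : IsSquare x := by
  obtain ⟨d, hd⟩ := h
  have hdvd : c ∣ d := by
    rw [← Nat.pow_dvd_pow_iff (n := 2) (by norm_num)]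
    exact ⟨x, by rw [sq, ← hd]; ring⟩
  obtain ⟨e, he⟩ := hdvd
  refine ⟨e, ?_⟩
  have h2 : x * c ^ 2 = (e * e) * c ^ 2 := by rw [hd, he]; ring
  exact Nat.eq_of_mul_eq_mul_right (by positivity) h2

lemma prod_symmdiff_sq (S T : Finset ℕ) :
    (∏ a ∈ S, a) * ∏ a ∈ T, a =
      (∏ a ∈ (S \ T) ∪ (T \ S), a) * (∏ a ∈ S ∩ T, a) ^ 2 := by
  have hdisj : Disjoint (S \ T) (T \ S) := by
    rw [Finset.disjoint_left]; intro a ha hb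
    exact (Finset.mem_sdiff.1 ha).2 (Finset.mem_sdiff.1 hb).1
  rw [Finset.prod_union hdisj]
  have h1 : (∏ a ∈ S \ T, a) * ∏ a ∈ S ∩ T, a = ∏ a ∈ S, a := by
    rw [← Finset.sdiff_inter_self_left]
    exact Finset.prod_sdiff Finset.inter_subset_left
  have h2 : (∏ a ∈ T \ S, a) * ∏ a ∈ S ∩ T, a = ∏ a ∈ T, a := by
    rw [Finset.inter_comm S T, ← Finset.sdiff_inter_self_left]
    exact Finset.prod_sdiff Finset.inter_subset_left
  rw [← h1, ← h2]; ring

lemma isSquare_symmdiff {S T : Finset ℕ} (hpos : ∀ a ∈ S ∪ T, 0 < a)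
    (hS : IsSquare (∏ a ∈ S, a)) (hT : IsSquare (∏ a ∈ T, a)) :
    IsSquare (∏ a ∈ (S \ T) ∪ (T \ S), a) := by
  have hc : (∏ a ∈ S ∩ T, a) ≠ 0 := by
    refine (Finset.prod_pos ?_).ne'
    intro a ha; exact hpos a (Finset.mem_union_left _ (Finset.mem_inter.1 ha).1)
  refine isSquare_of_mul_sq hc ?_
  rw [← prod_symmdiff_sq]
  exact hS.mul hT

lemma g_not_prime {n : ℕ} (hn : 0 < n) : ¬ (g n).Prime := by
  intro hK
  obtain ⟨S, hpos, hsq, hnS, hkS, hb⟩ := g_corr hn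
  set K := g n with hKdef
  have heven : Even ((∏ a ∈ S, a).factorization K) := by
    obtain ⟨r, hr⟩ := hsq
    have hrne : r ≠ 0 := by
      intro h0; rw [h0, mul_zero] at hr
      exact absurd hr (Finset.prod_pos hpos).ne'
    rw [hr, Nat.factorization_mul hrne hrne]
    exact ⟨r.factorization K, rfl⟩
  have hfact : (∏ a ∈ S, a).factorization K = ∑ a ∈ S, a.factorization K := by
    rw [Nat.factorization_prod (fun a ha => (hpos a ha).ne')]; simp
  have hsum : (∑ a ∈ S, a.factorization K) = 1 := by
    rw [Finset.sum_eq_single K]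
    · exact hK.factorization_self
    · intro a haS hane
      refine Nat.factorization_eq_zero_of_not_dvd (fun hdvd => hane ?_)
      have := Nat.le_of_dvd (hpos a haS) hdvd
      have := (hb a haS).2
      omega
    · intro h; exact absurd hkS h
  rw [hfact, hsum] at heven
  simp at heven

/-- Maximality: no `m > n` has `Corr m (g n)`. -/
lemma le_of_corr_g {n m : ℕ} (hn : 0 < n) (h : Corr m (g n)) : m ≤ n := by
  by_contra hlt
  push_neg at hlt
  obtain ⟨S, hSpos, hSsq, hnS, hKS, hSb⟩ := g_corr hn
  obtain ⟨T, hTpos, hTsq, hmT, hKT, hTb⟩ := h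
  set K := g n with hKdef
  set D := (S \ T) ∪ (T \ S) with hD
  have hpos : ∀ a ∈ S ∪ T, 0 < a := by
    intro a ha; rcases Finset.mem_union.1 ha with h | h
    · exact hSpos a h
    · exact hTpos a h
  have hDsq := isSquare_symmdiff hpos hSsq hTsq
  have hnD : n ∈ D := by
    refine Finset.mem_union_left _ (Finset.mem_sdiff.2 ⟨hnS, fun hnT => ?_⟩)
    have := (hTb n hnT).1; omega
  have hKD : K ∉ D := by
    intro hKD
    rcases Finset.mem_union.1 hKD with h | h
    · exact (Finset.mem_sdiff.1 h).2 hKT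
    · exact (Finset.mem_sdiff.1 h).2 hKS
  have hDne : D.Nonempty := ⟨n, hnD⟩
  set M := D.max' hDne with hM
  have hMD : M ∈ D := D.max'_mem hDne
  have hMlt : M < K := by
    have hMle : M ≤ K := by
      rcases Finset.mem_union.1 hMD with h | h
      · exact (hSb M (Finset.mem_sdiff.1 h).1).2
      · exact (hTb M (Finset.mem_sdiff.1 h).1).2
    rcases hMle.lt_or_eq with h | h
    · exact h
    · exact absurd (h ▸ hMD) hKD
  have hcorr : Corr n M := by
    refine ⟨D, ?_, hDsq, hnD, hMD, ?_⟩
    · intro a ha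
      rcases Finset.mem_union.1 ha with h | h
      · exact hSpos a (Finset.mem_sdiff.1 h).1
      · exact hTpos a (Finset.mem_sdiff.1 h).1
    · intro a ha
      refine ⟨?_, D.le_max' a ha⟩
      rcases Finset.mem_union.1 ha with h | h
      · exact (hSb a (Finset.mem_sdiff.1 h).1).1
      · have := (hTb a (Finset.mem_sdiff.1 h).1).1; omega
  have := g_le hcorr
  omega

lemma corr_exists_of_not_prime {k : ℕ} (hk : 0 < k) (hnp : ¬ k.Prime) :
    ∃ m, Corr m k := by
  by_cases hsq : IsSquare k
  · exact ⟨k, ⟨{k}, by simpa using hk, by simpa using hsq, by simp, by simp, by simp⟩⟩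
  · have hk1 : 1 < k := by
      rcases Nat.lt_or_ge k 2 with h | h
      · exfalso
        have hk1 : k = 1 := by omega
        exact hsq ⟨1, by omega⟩
      · omega
    set a := k.minFac with ha
    have hap : a.Prime := Nat.minFac_prime (by omega)
    obtain ⟨b, hab⟩ : a ∣ k := Nat.minFac_dvd k
    have hb1 : 1 < b := by
      rcases Nat.lt_or_ge b 2 with h | h
      · interval_cases b
        · omega
        · exact absurd (by rw [hab, mul_one]; exact hap) hnp
      · omega
    have halb : a < b := by
      have hale : a ≤ b := by
        have : a ≤ k.minFac := le_refl _
        have hbfac : b.minFac ∣ k := (Nat.minFac_dvd b).trans ⟨a, by rw [hab]; ring⟩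
        have : a ≤ b.minFac := Nat.minFac_le_of_dvd (Nat.minFac_prime (by omega)).two_le hbfac
        exact this.trans (Nat.minFac_le (by omega))
      rcases hale.lt_or_eq with h | h
      · exact h
      · exact absurd ⟨a, by rw [hab, h]⟩ hsq
    have hblt : b < k := by
      have h2a : 2 ≤ a := hap.two_le
      calc b < 2 * b := by omega
        _ ≤ a * b := Nat.mul_le_mul_right b h2a
        _ = k := hab.symm
    have hak : a < k := halb.trans hblt
    have h2a : 2 ≤ a := hap.two_le
    refine ⟨a, ⟨{a, b, k}, ?_, ?_, ?_, ?_, ?_⟩⟩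
    · intro x hx; simp at hx; rcases hx with h | h | h <;> omega
    · have h1 : a ∉ ({b, k} : Finset ℕ) := by simp; omega
      have h2 : b ∉ ({k} : Finset ℕ) := by simp; omega
      rw [show ({a, b, k} : Finset ℕ) = insert a {b, k} from rfl,
        Finset.prod_insert h1, Finset.prod_pair (by omega)]
      exact ⟨a * b, by rw [hab]; ring⟩
    · simp
    · simp
    · intro x hx; simp at hx
      have := hap.two_le
      rcases hx with h | h | h <;> omega

theorem g_bijOn : Set.BijOn g {n : ℕ | 0 < n} {k : ℕ | 0 < k ∧ ¬ k.Prime} := by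
  refine ⟨?_, ?_, ?_⟩
  · intro n hn
    simp only [Set.mem_setOf_eq] at hn ⊢
    exact ⟨hn.trans_le (g_corr hn).le, g_not_prime hn⟩
  · intro n1 hn1 n2 hn2 heq
    simp only [Set.mem_setOf_eq] at hn1 hn2
    have h1 : n1 ≤ n2 := le_of_corr_g hn2 (heq ▸ g_corr hn1)
    have h2 : n2 ≤ n1 := le_of_corr_g hn1 (heq ▸ g_corr hn2)
    omega
  · intro k hk
    simp only [Set.mem_setOf_eq] at hk
    obtain ⟨hkpos, hknp⟩ := hk
    obtain ⟨m0, hm0⟩ := corr_exists_of_not_prime hkpos hknp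
    set Mset := {m | Corr m k} with hMset
    have hbdd : BddAbove Mset := ⟨k, fun m hm => hm.le⟩
    have hne : Mset.Nonempty := ⟨m0, hm0⟩
    set n := sSup Mset with hn
    have hnmem : n ∈ Mset := Nat.sSup_mem hne hbdd
    have hnk : Corr n k := hnmem
    have hnpos : 0 < n := hnk.pos
    refine ⟨n, hnpos, ?_⟩
    by_contra hne'
    have hKlt : g n < k := lt_of_le_of_ne (g_le hnk) hne'
    obtain ⟨S, hSpos, hSsq, hnS, hKS, hSb⟩ := g_corr hnpos
    obtain ⟨T, hTpos, hTsq, hnT, hkT, hTb⟩ := hnk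
    set K := g n with hKdef
    set D := (S \ T) ∪ (T \ S) with hD
    have hpos : ∀ a ∈ S ∪ T, 0 < a := by
      intro a ha; rcases Finset.mem_union.1 ha with h | h
      · exact hSpos a h
      · exact hTpos a h
    have hDsq := isSquare_symmdiff hpos hSsq hTsq
    have hkD : k ∈ D := by
      refine Finset.mem_union_right _ (Finset.mem_sdiff.2 ⟨hkT, fun hkS' => ?_⟩)
      have := (hSb k hkS').2; omega
    have hnD : n ∉ D := by
      intro h
      rcases Finset.mem_union.1 h with h | h
      · exact (Finset.mem_sdiff.1 h).2 hnT
      · exact (Finset.mem_sdiff.1 h).2 hnS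
    have hDne : D.Nonempty := ⟨k, hkD⟩
    set m := D.min' hDne with hm
    have hmD : m ∈ D := D.min'_mem hDne
    have hmgt : n < m := by
      have hmge : n ≤ m := by
        rcases Finset.mem_union.1 hmD with h | h
        · exact (hSb m (Finset.mem_sdiff.1 h).1).1
        · exact (hTb m (Finset.mem_sdiff.1 h).1).1
      rcases hmge.lt_or_eq with h | h
      · exact h
      · exact absurd (h ▸ hmD) hnD
    have hcorr : Corr m k := by
      refine ⟨D, ?_, hDsq, hmD, hkD, ?_⟩
      · intro a ha
        rcases Finset.mem_union.1 ha with h | h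
        · exact hSpos a (Finset.mem_sdiff.1 h).1
        · exact hTpos a (Finset.mem_sdiff.1 h).1
      · intro a ha
        refine ⟨D.min'_le a ha, ?_⟩
        rcases Finset.mem_union.1 ha with h | h
        · have := (hSb a (Finset.mem_sdiff.1 h).1).2; omega
        · exact (hTb a (Finset.mem_sdiff.1 h).1).2
    have : m ≤ n := le_csSup hbdd hcorr
    omega
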